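/- With L^Φ_X = L_X + i_{X_Φ} the deformed Lie differential of a Lie algebroid E with 1-cocycle Φ, the graded commutators satisfy [[L^Φ_X, L^Φ_Y]] = -L^Φ_{[[Y,X]]} and [[L^Φ_X, i_Y]] = -i_{[[Y,X]]}, with the ordinary Schouten bracket [[Y,X]]. -/
import Mathlib


/-- Abstract model of the graded commutative algebra `A(E)` of multivector fields /
multisections of a Lie algebroid, equipped with the wedge product and the
Schouten–Nijenhuis bracket (sign convention: graded Lie bracket for the degree
shifted by one).  `H p X` means `X` is homogeneous of (multivector) degree `p`. -/
structure SchoutenAlgebra (V : Type*) [AddCommGroup V] [Module ℝ V] where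
  wedge : V →ₗ[ℝ] V →ₗ[ℝ] V
  bracket : V →ₗ[ℝ] V →ₗ[ℝ] V
  H : ℤ → V → Prop
  one : V
  h_one : H 0 one
  wedge_one : ∀ X : V, wedge one X = X
  wedge_assoc : ∀ X Y Z : V, wedge (wedge X Y) Z = wedge X (wedge Y Z)
  wedge_comm : ∀ {p q : ℤ} {X Y : V}, H p X → H q Y →
    wedge X Y = (Int.negOnePow (p * q) : ℤ) • wedge Y X
  wedge_mem : ∀ {p q : ℤ} {X Y : V}, H p X → H q Y → H (p + q) (wedge X Y)
  bracket_mem : ∀ {p q : ℤ} {X Y : V}, H p X → H q Y → H (p + q - 1) (bracket X Y)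
  bracket_antisymm : ∀ {p q : ℤ} {X Y : V}, H p X → H q Y →
    bracket X Y = -((Int.negOnePow ((p - 1) * (q - 1)) : ℤ) • bracket Y X)
  bracket_jacobi : ∀ {p q : ℤ} {X Y : V}, H p X → H q Y → ∀ Z : V,
    bracket (bracket X Y) Z =
      bracket X (bracket Y Z) -
        (Int.negOnePow ((p - 1) * (q - 1)) : ℤ) • bracket Y (bracket X Z)
  bracket_leibniz : ∀ {p q : ℤ} {X Y : V}, H p X → H q Y → ∀ Z : V,
    bracket X (wedge Y Z) =
      wedge (bracket X Y) Z + (Int.negOnePow ((p - 1) * q) : ℤ) • wedge Y (bracket X Z)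

/-- Abstract Cartan calculus of a Lie algebroid `E` with 1-cocycle `Φ`:
the graded module `Ω` of forms `Ω(E) = A(E*)` with grading `HΩ`, wedge product
`wedgeΩ`, number (degree) operator `N`, exterior derivative `d`, the operator
`Φw : μ ↦ Φ∧μ`, contraction `i X` and Lie differential
`L X = [[i X, d]]` for multisections `X`, together with the contraction `iφ`
with the 1-cocycle `Φ` on multisections and the classical Cartan identities
`[[L_X,L_Y]] = -L_{[[Y,X]]}`, `[[L_X,i_Y]] = -i_{[[Y,X]]}`, `[[i_X,i_Y]] = 0`. -/
structure CartanCalculus {V : Type*} [AddCommGroup V] [Module ℝ V]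
    (S : SchoutenAlgebra V) (Ω : Type*) [AddCommGroup Ω] [Module ℝ Ω] where
  HΩ : ℤ → Ω → Prop
  wedgeΩ : Ω →ₗ[ℝ] Ω →ₗ[ℝ] Ω
  d : Module.End ℝ Ω
  Φw : Module.End ℝ Ω
  N : Module.End ℝ Ω
  i : V →ₗ[ℝ] Module.End ℝ Ω
  L : V → Module.End ℝ Ω
  iφ : V →ₗ[ℝ] V
  hiφ_mem : ∀ {p : ℤ} {X : V}, S.H p X → S.H (p - 1) (iφ X)
  hN : ∀ {m : ℤ} {μ : Ω}, HΩ m μ → N μ = (m : ℝ) • μ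
  hwedgeΩ_mem : ∀ {m m' : ℤ} {μ ν : Ω}, HΩ m μ → HΩ m' ν → HΩ (m + m') (wedgeΩ μ ν)
  hd_mem : ∀ {m : ℤ} {μ : Ω}, HΩ m μ → HΩ (m + 1) (d μ)
  hΦw_mem : ∀ {m : ℤ} {μ : Ω}, HΩ m μ → HΩ (m + 1) (Φw μ)
  hi_mem : ∀ {p : ℤ} {X : V}, S.H p X → ∀ {m : ℤ} {μ : Ω}, HΩ m μ → HΩ (m - p) (i X μ)
  hL_def : ∀ {p : ℤ} {X : V}, S.H p X → ∀ μ : Ω,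
    L X μ = i X (d μ) + (Int.negOnePow (p - 1) : ℤ) • d (i X μ)
  hcontr : ∀ {p : ℤ} {X : V}, S.H p X → ∀ μ : Ω,
    i X (Φw μ) = i (iφ X) μ - (Int.negOnePow (p - 1) : ℤ) • Φw (i X μ)
  hLL : ∀ {p q : ℤ} {X Y : V}, S.H p X → S.H q Y →
    L X * L Y - (Int.negOnePow ((p - 1) * (q - 1)) : ℤ) • (L Y * L X) =
      -L (S.bracket Y X)
  hLi : ∀ {p q : ℤ} {X Y : V}, S.H p X → S.H q Y →
    L X * i Y - (Int.negOnePow ((p - 1) * q) : ℤ) • (i Y * L X) =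
      -i (S.bracket Y X)
  hii : ∀ {p q : ℤ} {X Y : V}, S.H p X → S.H q Y →
    i X * i Y = (Int.negOnePow (p * q) : ℤ) • (i Y * i X)

/-- The Jacobi–Lie differential
`£^{Φ,a}_X μ = L_X μ + (|μ|+a) i_{X_Φ} μ - (-1)^x x Φ∧ i_X μ`
of a Jacobi algebroid `(E,Φ)`, for `X` of degree `p` (`x = p-1`). -/
def CartanCalculus.pounds {V : Type*} [AddCommGroup V] [Module ℝ V]
    {S : SchoutenAlgebra V} {Ω : Type*} [AddCommGroup Ω] [Module ℝ Ω]
    (C : CartanCalculus S Ω) (a : ℝ) (p : ℤ) (X : V) : Module.End ℝ Ω :=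
  C.L X + C.i (C.iφ X) * (C.N + a • 1)
    - ((Int.negOnePow (p - 1) : ℤ) * (p - 1)) • (C.Φw * C.i X)

/-- For the deformed Lie differential `L^Φ_X = L_X + i_{X_Φ}` of a
Lie algebroid `E` with 1-cocycle `Φ`, the graded commutators satisfy
`[[L^Φ_X, L^Φ_Y]] = -L^Φ_{[[Y,X]]}` and `[[L^Φ_X, i_Y]] = -i_{[[Y,X]]}`,
with the ordinary Schouten bracket `[[Y,X]]`. -/
theorem deformed_lie_differential_commutators {V Ω : Type*}
    [AddCommGroup V] [Module ℝ V] [AddCommGroup Ω] [Module ℝ Ω]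
    (S : SchoutenAlgebra V) (C : CartanCalculus S Ω)
    (hcocycle : ∀ {p : ℤ} {X : V}, S.H p X → ∀ Y : V,
      C.iφ (S.bracket X Y) =
        S.bracket (C.iφ X) Y + (Int.negOnePow (p - 1) : ℤ) • S.bracket X (C.iφ Y))
    {p q : ℤ} (X Y : V) (hX : S.H p X) (hY : S.H q Y) :
    ((C.L X + C.i (C.iφ X)) * (C.L Y + C.i (C.iφ Y))
        - (Int.negOnePow ((p - 1) * (q - 1)) : ℤ) •
            ((C.L Y + C.i (C.iφ Y)) * (C.L X + C.i (C.iφ X))) =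
      -(C.L (S.bracket Y X) + C.i (C.iφ (S.bracket Y X)))) ∧
    ((C.L X + C.i (C.iφ X)) * C.i Y
        - (Int.negOnePow ((p - 1) * q) : ℤ) • (C.i Y * (C.L X + C.i (C.iφ X))) =
      -C.i (S.bracket Y X)) := by
  have hee : (Int.negOnePow ((p - 1) * (q - 1)) : ℤ) *
      (Int.negOnePow ((p - 1) * (q - 1)) : ℤ) = 1 := by
    rw [← Units.val_mul, Int.units_mul_self, Units.val_one]
  have hX' := C.hiφ_mem hX
  have hY' := C.hiφ_mem hY
  constructor
  · -- first identity
    have h1 := C.hLL hX hY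
    have h2 := C.hLi hX hY'
    have h3 := C.hLi hY hX'
    have h4 := C.hii hX' hY'
    rw [show (q - 1) * (p - 1) = (p - 1) * (q - 1) by ring] at h3
    rw [show (p - 1) * (q - 1) = (p - 1) * (q - 1) by ring] at h4
    have h3' : C.i (C.iφ X) * C.L Y
        - (Int.negOnePow ((p - 1) * (q - 1)) : ℤ) • (C.L Y * C.i (C.iφ X)) =
        (Int.negOnePow ((p - 1) * (q - 1)) : ℤ) • C.i (S.bracket (C.iφ X) Y) := by
      calc C.i (C.iφ X) * C.L Y
          - (Int.negOnePow ((p - 1) * (q - 1)) : ℤ) • (C.L Y * C.i (C.iφ X))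
          = -((Int.negOnePow ((p - 1) * (q - 1)) : ℤ) •
              (C.L Y * C.i (C.iφ X)
                - (Int.negOnePow ((p - 1) * (q - 1)) : ℤ) • (C.i (C.iφ X) * C.L Y))) := by
            rw [smul_sub, smul_smul, hee, one_smul]; abel
        _ = (Int.negOnePow ((p - 1) * (q - 1)) : ℤ) • C.i (S.bracket (C.iφ X) Y) := by
            rw [h3, smul_neg, neg_neg]
    have hc := hcocycle hY X
    have ha := S.bracket_antisymm hY hX'
    have hsign : (Int.negOnePow (q - 1) : ℤ) * (Int.negOnePow ((q - 1) * (p - 1 - 1)) : ℤ) =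
        (Int.negOnePow ((p - 1) * (q - 1)) : ℤ) := by
      rw [← Units.val_mul, ← Int.negOnePow_add,
        show (q - 1) + (q - 1) * (p - 1 - 1) = (p - 1) * (q - 1) by ring]
    calc (C.L X + C.i (C.iφ X)) * (C.L Y + C.i (C.iφ Y))
        - (Int.negOnePow ((p - 1) * (q - 1)) : ℤ) •
            ((C.L Y + C.i (C.iφ Y)) * (C.L X + C.i (C.iφ X)))
        = (C.L X * C.L Y - (Int.negOnePow ((p - 1) * (q - 1)) : ℤ) • (C.L Y * C.L X))
          + (C.L X * C.i (C.iφ Y)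
              - (Int.negOnePow ((p - 1) * (q - 1)) : ℤ) • (C.i (C.iφ Y) * C.L X))
          + (C.i (C.iφ X) * C.L Y
              - (Int.negOnePow ((p - 1) * (q - 1)) : ℤ) • (C.L Y * C.i (C.iφ X)))
          + (C.i (C.iφ X) * C.i (C.iφ Y)
              - (Int.negOnePow ((p - 1) * (q - 1)) : ℤ) •
                  (C.i (C.iφ Y) * C.i (C.iφ X))) := by
          simp only [mul_add, add_mul, smul_add]
          abel
      _ = -(C.L (S.bracket Y X) + C.i (C.iφ (S.bracket Y X))) := by
          rw [h1, h2, h3', h4, hc, ha]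
          simp only [map_add, map_zsmul, map_neg, smul_neg, smul_smul, hsign]
          abel
  · -- second identity
    have h5 := C.hLi hX hY
    have h6 := C.hii hX' hY
    calc (C.L X + C.i (C.iφ X)) * C.i Y
        - (Int.negOnePow ((p - 1) * q) : ℤ) • (C.i Y * (C.L X + C.i (C.iφ X)))
        = (C.L X * C.i Y - (Int.negOnePow ((p - 1) * q) : ℤ) • (C.i Y * C.L X))
          + (C.i (C.iφ X) * C.i Y
              - (Int.negOnePow ((p - 1) * q) : ℤ) • (C.i Y * C.i (C.iφ X))) := by
          simp only [mul_add, add_mul, smul_add]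
          abel
      _ = -C.i (S.bracket Y X) := by rw [h5, h6]; abel
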